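/- arXiv:math/0309098 — 3 statements merged into one kernel-verified Lean document; each statement's English description precedes it below -/
import Mathlib

section
/- Let m ∈ {1, −1} be fixed, and suppose that for each ε in an open interval around 0 we are given: a continuous 1-periodic function u_ε : ℝ → ℂ, a real number λ_ε, and continuously differentiable functions f_{1,ε}, f_{2,ε} : ℝ → ℂ satisfying the Zakharov–Shabat system f_{1,ε}'(x) − u_ε(x)·f_{2,ε}(x) = −iλ_ε·f_{1,ε}(x), f_{2,ε}'(x) − conj(u_ε(x))·f_{1,ε}(x) = iλ_ε·f_{2,ε}(x), the quasiperiodicity f_{j,ε}(x+1) = m·f_{j,ε}(x) for j = 1,2, the symmetry f_{2,ε}(x) = conj(f_{1,ε}(x)), and the normalization ∫₀¹ |f_{1,ε}(x)|² dx = 1. Assume the maps ε ↦ u_ε and ε ↦ f_{j,ε} (j = 1,2) are differentiable at ε = 0 as maps into the space of continuous functions on ℝ with the supremum norm on [0,1], with derivatives u̇ and ḟ_j, and that ε ↦ λ_ε is differentiable at ε = 0. Then the derivative of λ_ε at ε = 0 equals Re ∫₀¹ conj(u̇(x)) · i·f_{1,0}(x)² dx; that is, the gradient of the eigenvalue λ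 with respect to conj(u) is i·f₁². -/
/-- Differentiability at `ε = 0` of a family of functions, in the sense of the
supremum norm on `[0,1]`: the first-order Taylor remainder is `o(ε)` uniformly
on `[0,1]`. -/
def HasSupNormDerivOnIccAtZero (F : ℝ → ℝ → ℂ) (Fdot : ℝ → ℂ) : Prop :=
  Filter.Tendsto
    (fun ε : ℝ => (⨆ x : Set.Icc (0:ℝ) 1, ‖F ε x - F 0 x - ε • Fdot x‖) / |ε|)
    (nhdsWithin 0 {0}ᶜ) (nhds 0)

open Filter MeasureTheory Set Complex

lemma ZS.bounds (F : ℝ → ℝ → ℂ) (Fd : ℝ → ℂ) (hFd : Continuous Fd)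
    {δ : ℝ} (hδ : 0 < δ) (hFc : ∀ ε ∈ Set.Ioo (-δ) δ, Continuous (F ε))
    (h : HasSupNormDerivOnIccAtZero F Fd) :
    (∀ x ∈ Set.Icc (0:ℝ) 1,
      Tendsto (fun ε : ℝ => (F ε x - F 0 x) / (ε:ℂ)) (nhdsWithin 0 {0}ᶜ) (nhds (Fd x))) ∧
    (∀ C : ℝ, 0 < C → ∀ᶠ ε in nhdsWithin (0:ℝ) {0}ᶜ, ∀ x ∈ Set.Icc (0:ℝ) 1,
      ‖(F ε x - F 0 x) / (ε:ℂ) - Fd x‖ ≤ C ∧ ‖F ε x - F 0 x‖ ≤ C) := by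
  have h0 : (0:ℝ) ∈ Set.Ioo (-δ) δ := by constructor <;> linarith
  have hIoo : ∀ᶠ ε in nhdsWithin (0:ℝ) {0}ᶜ, ε ∈ Set.Ioo (-δ) δ :=
    eventually_nhdsWithin_of_eventually_nhds (Ioo_mem_nhds (by linarith) hδ)
  have hne : ∀ᶠ ε in nhdsWithin (0:ℝ) {0}ᶜ, ε ≠ 0 := by
    filter_upwards [self_mem_nhdsWithin] with ε hε using hε
  have core : ∀ᶠ ε in nhdsWithin (0:ℝ) {0}ᶜ, ∀ x ∈ Set.Icc (0:ℝ) 1,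
      ‖(F ε x - F 0 x) / (ε:ℂ) - Fd x‖
        ≤ (⨆ x : Set.Icc (0:ℝ) 1, ‖F ε x - F 0 x - ε • Fd x‖) / |ε| := by
    filter_upwards [hIoo, hne] with ε hεI hε0 x hx
    have hcont : Continuous fun y : Set.Icc (0:ℝ) 1 => ‖F ε y - F 0 y - ε • Fd y‖ :=
      ((((hFc ε hεI).sub (hFc 0 h0)).sub (hFd.const_smul ε)).norm).comp continuous_subtype_val
    have hbdd : BddAbove (Set.range fun y : Set.Icc (0:ℝ) 1 => ‖F ε y - F 0 y - ε • Fd y‖) :=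
      (isCompact_range hcont).bddAbove
    have heq : (F ε x - F 0 x) / (ε:ℂ) - Fd x = (F ε x - F 0 x - ε • Fd x) / (ε:ℂ) := by
      have : (ε:ℂ) ≠ 0 := by exact_mod_cast hε0
      field_simp [Complex.real_smul]
      rw [Complex.real_smul]
    rw [heq, norm_div, Complex.norm_real, Real.norm_eq_abs]
    apply div_le_div_of_nonneg_right (le_ciSup hbdd ⟨x, hx⟩) (abs_nonneg ε)
  constructor
  · intro x hx
    rw [tendsto_iff_norm_sub_tendsto_zero]
    refine squeeze_zero' (.of_forall fun _ => norm_nonneg _) ?_ h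
    filter_upwards [core] with ε hc using hc x hx
  · intro C hC
    obtain ⟨Md, hMd⟩ : ∃ M, ∀ x ∈ Set.Icc (0:ℝ) 1, ‖Fd x‖ ≤ M :=
      isCompact_Icc.exists_bound_of_continuousOn hFd.continuousOn
    have hMd0 : 0 ≤ Md := le_trans (norm_nonneg _) (hMd 0 ⟨le_refl _, zero_le_one⟩)
    have hsmall : ∀ᶠ ε in nhdsWithin (0:ℝ) {0}ᶜ,
        (⨆ x : Set.Icc (0:ℝ) 1, ‖F ε x - F 0 x - ε • Fd x‖) / |ε| < min C 1 :=
      h.eventually (gt_mem_nhds (lt_min hC one_pos))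
    have habs : ∀ᶠ ε in nhdsWithin (0:ℝ) {0}ᶜ, |ε| < C / (1 + Md + 1) := by
      have : ∀ᶠ ε in nhds (0:ℝ), |ε| < C / (1 + Md + 1) := by
        have := Metric.ball_mem_nhds (0:ℝ) (show 0 < C / (1+Md+1) by positivity)
        filter_upwards [this] with ε hε
        simpa [Real.dist_eq] using hε
      exact eventually_nhdsWithin_of_eventually_nhds this
    filter_upwards [core, hsmall, habs, hne] with ε hc hs ha hε0 x hx
    have h1 : ‖(F ε x - F 0 x) / (ε:ℂ) - Fd x‖ ≤ min C 1 := le_trans (hc x hx) hs.le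
    refine ⟨le_trans h1 (min_le_left _ _), ?_⟩
    have hεC : (ε:ℂ) ≠ 0 := by exact_mod_cast hε0
    have : ‖F ε x - F 0 x‖ = |ε| * ‖(F ε x - F 0 x) / (ε:ℂ)‖ := by
      rw [norm_div, Complex.norm_real, Real.norm_eq_abs]
      field_simp
    rw [this]
    have h2 : ‖(F ε x - F 0 x) / (ε:ℂ)‖ ≤ 1 + Md := by
      calc ‖(F ε x - F 0 x) / (ε:ℂ)‖
          ≤ ‖(F ε x - F 0 x) / (ε:ℂ) - Fd x‖ + ‖Fd x‖ := by
            have := norm_add_le ((F ε x - F 0 x) / (ε:ℂ) - Fd x) (Fd x)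
            simpa using this
        _ ≤ 1 + Md := add_le_add (le_trans h1 (min_le_right _ _)) (hMd x hx)
    calc |ε| * ‖(F ε x - F 0 x) / (ε:ℂ)‖ ≤ (C / (1 + Md + 1)) * (1 + Md + 1) := by
          apply mul_le_mul ha.le (le_trans h2 (by linarith)) (norm_nonneg _) (by positivity)
      _ = C := by field_simp

lemma ZS.tendsto_int (Φ : ℝ → ℝ → ℂ) (Φ0 : ℝ → ℂ) (C : ℝ)
    (hmeas : ∀ᶠ ε in nhdsWithin (0:ℝ) {0}ᶜ, Continuous (Φ ε))
    (hbound : ∀ᶠ ε in nhdsWithin (0:ℝ) {0}ᶜ, ∀ x ∈ Set.Icc (0:ℝ) 1, ‖Φ ε x‖ ≤ C)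
    (hlim : ∀ x ∈ Set.Icc (0:ℝ) 1,
      Tendsto (fun ε => Φ ε x) (nhdsWithin 0 {0}ᶜ) (nhds (Φ0 x))) :
    Tendsto (fun ε => ∫ x in (0:ℝ)..1, Φ ε x) (nhdsWithin 0 {0}ᶜ)
      (nhds (∫ x in (0:ℝ)..1, Φ0 x)) := by
  have hsub : Set.uIoc (0:ℝ) 1 ⊆ Set.Icc 0 1 := by
    rw [Set.uIoc_of_le zero_le_one]; exact Set.Ioc_subset_Icc_self
  refine intervalIntegral.tendsto_integral_filter_of_dominated_convergence
    (fun _ => C) ?_ ?_ ?_ ?_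
  · filter_upwards [hmeas] with ε hε using hε.aestronglyMeasurable.restrict
  · filter_upwards [hbound] with ε hε
    exact Eventually.of_forall fun x hx => hε x (hsub hx)
  · exact intervalIntegrable_const
  · exact Eventually.of_forall fun x hx => hlim x (hsub hx)

/-- Perturbation formula for a simple periodic/antiperiodic eigenvalue of the
Zakharov–Shabat operator: if a differentiable family of normalized symmetric
quasiperiodic eigenfunction data is given, then the derivative of the
eigenvalue at `ε = 0` equals `Re ∫₀¹ conj(u̇) · (i f₁²) dx`, i.e. the gradient
of `λ` with respect to `conj u` is `i f₁²`. -/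
theorem zakharov_shabat_eigenvalue_gradient
    (m : ℂ) (hm : m = 1 ∨ m = -1) (δ : ℝ) (hδ : 0 < δ)
    (u : ℝ → ℝ → ℂ) (lam : ℝ → ℝ) (f₁ f₂ : ℝ → ℝ → ℂ)
    (hu : ∀ ε ∈ Set.Ioo (-δ) δ, Continuous (u ε) ∧ Function.Periodic (u ε) 1)
    (hf : ∀ ε ∈ Set.Ioo (-δ) δ, ContDiff ℝ 1 (f₁ ε) ∧ ContDiff ℝ 1 (f₂ ε))
    (hode₁ : ∀ ε ∈ Set.Ioo (-δ) δ, ∀ x,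
      deriv (f₁ ε) x - u ε x * f₂ ε x = -Complex.I * (lam ε : ℂ) * f₁ ε x)
    (hode₂ : ∀ ε ∈ Set.Ioo (-δ) δ, ∀ x,
      deriv (f₂ ε) x - (starRingEnd ℂ) (u ε x) * f₁ ε x
        = Complex.I * (lam ε : ℂ) * f₂ ε x)
    (hqp : ∀ ε ∈ Set.Ioo (-δ) δ, ∀ x,
      f₁ ε (x + 1) = m * f₁ ε x ∧ f₂ ε (x + 1) = m * f₂ ε x)
    (hsym : ∀ ε ∈ Set.Ioo (-δ) δ, ∀ x, f₂ ε x = (starRingEnd ℂ) (f₁ ε x))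
    (hnorm : ∀ ε ∈ Set.Ioo (-δ) δ, (∫ x in (0:ℝ)..1, ‖f₁ ε x‖ ^ 2) = 1)
    (udot f₁dot f₂dot : ℝ → ℂ)
    (hudot : Continuous udot) (hf₁dot : Continuous f₁dot)
    (hf₂dot : Continuous f₂dot)
    (hudiff : HasSupNormDerivOnIccAtZero u udot)
    (hf₁diff : HasSupNormDerivOnIccAtZero f₁ f₁dot)
    (hf₂diff : HasSupNormDerivOnIccAtZero f₂ f₂dot)
    (hlam : DifferentiableAt ℝ lam 0) :
    deriv lam 0
      = (∫ x in (0:ℝ)..1,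
          (starRingEnd ℂ) (udot x) * (Complex.I * (f₁ 0 x) ^ 2)).re := by
  have h0 : (0:ℝ) ∈ Set.Ioo (-δ) δ := by constructor <;> linarith
  set l := nhdsWithin (0:ℝ) {0}ᶜ with hl
  set P : ℝ → ℝ → ℂ := fun ε x => f₁ ε x * f₂ 0 x + f₂ ε x * f₁ 0 x with hPdef
  set Φ : ℝ → ℝ → ℂ := fun ε x =>
    (u ε x - u 0 x) / (ε:ℂ) * f₂ ε x * f₂ 0 x
      - (starRingEnd ℂ) ((u ε x - u 0 x) / (ε:ℂ)) * f₁ ε x * f₁ 0 x with hΦdef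
  -- continuity facts
  have hcu : ∀ ε ∈ Set.Ioo (-δ) δ, Continuous (u ε) := fun ε hε => (hu ε hε).1
  have hcf₁ : ∀ ε ∈ Set.Ioo (-δ) δ, Continuous (f₁ ε) := fun ε hε => (hf ε hε).1.continuous
  have hcf₂ : ∀ ε ∈ Set.Ioo (-δ) δ, Continuous (f₂ ε) := fun ε hε => (hf ε hε).2.continuous
  -- derivative facts
  have D : ∀ η ∈ Set.Ioo (-δ) δ, ∀ x : ℝ,
      HasDerivAt (f₁ η) (u η x * f₂ η x - Complex.I * (lam η : ℂ) * f₁ η x) x ∧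
      HasDerivAt (f₂ η) ((starRingEnd ℂ) (u η x) * f₁ η x + Complex.I * (lam η : ℂ) * f₂ η x) x := by
    intro η hη x
    have h1 := ((hf η hη).1.differentiable one_ne_zero x).hasDerivAt
    have h2 := ((hf η hη).2.differentiable one_ne_zero x).hasDerivAt
    constructor
    · convert h1 using 1
      · rfl
      linear_combination -hode₁ η hη x
    · convert h2 using 1
      · rfl
      linear_combination -hode₂ η hη x
  -- key exact identity
  have key : ∀ ε ∈ Set.Ioo (-δ) δ, ε ≠ 0 →
      (ε:ℂ) * ∫ x in (0:ℝ)..1, Φ ε x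
        = Complex.I * ((lam ε : ℂ) - (lam 0 : ℂ)) * ∫ x in (0:ℝ)..1, P ε x := by
    intro ε hε hε0
    have hεC : (ε:ℂ) ≠ 0 := by exact_mod_cast hε0
    have hF : ∀ x ∈ Set.uIcc (0:ℝ) 1, HasDerivAt (fun y => f₁ ε y * f₂ 0 y - f₂ ε y * f₁ 0 y)
        ((ε:ℂ) * Φ ε x + Complex.I * ((lam 0 : ℂ) - (lam ε : ℂ)) * P ε x) x := by
      intro x _
      have A := (((D ε hε x).1.mul (D 0 h0 x).2).sub ((D ε hε x).2.mul (D 0 h0 x).1))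
      convert A using 1
      · rfl
      · rfl
      simp only [hΦdef, hPdef, map_div₀, map_sub, Complex.conj_ofReal]
      field_simp
      ring
    have hΦc : Continuous (Φ ε) := by
      apply Continuous.sub
      · exact ((((hcu ε hε).sub (hcu 0 h0)).div_const _).mul (hcf₂ ε hε)).mul (hcf₂ 0 h0)
      · exact (((continuous_star.comp (((hcu ε hε).sub (hcu 0 h0)).div_const _))).mul
          (hcf₁ ε hε)).mul (hcf₁ 0 h0)
    have hPc : Continuous (P ε) :=
      ((hcf₁ ε hε).mul (hcf₂ 0 h0)).add ((hcf₂ ε hε).mul (hcf₁ 0 h0))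
    have hGc : Continuous (fun x => (ε:ℂ) * Φ ε x
        + Complex.I * ((lam 0 : ℂ) - (lam ε : ℂ)) * P ε x) :=
      (continuous_const.mul hΦc).add (continuous_const.mul hPc)
    have hint := intervalIntegral.integral_eq_sub_of_hasDerivAt hF (hGc.intervalIntegrable 0 1)
    have hper : f₁ ε 1 * f₂ 0 1 - f₂ ε 1 * f₁ 0 1 = f₁ ε 0 * f₂ 0 0 - f₂ ε 0 * f₁ 0 0 := by
      have h1 := (hqp ε hε 0).1
      have h2 := (hqp ε hε 0).2
      have h3 := (hqp 0 h0 0).1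
      have h4 := (hqp 0 h0 0).2
      norm_num at h1 h2 h3 h4
      have hm2 : m * m = 1 := by rcases hm with h | h <;> simp [h]
      rw [h1, h2, h3, h4]
      linear_combination (f₁ ε 0 * f₂ 0 0 - f₂ ε 0 * f₁ 0 0) * hm2
    rw [hper, sub_self] at hint
    rw [intervalIntegral.integral_add ((hΦc.intervalIntegrable 0 1).const_mul _)
      ((hPc.intervalIntegrable 0 1).const_mul _), intervalIntegral.integral_const_mul,
      intervalIntegral.integral_const_mul] at hint
    linear_combination hint
  -- pointwise limits and bounds from sup-norm differentiability
  obtain ⟨upt, ubd⟩ := ZS.bounds u udot hudot hδ hcu hudiff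
  obtain ⟨f1pt, f1bd⟩ := ZS.bounds f₁ f₁dot hf₁dot hδ hcf₁ hf₁diff
  obtain ⟨f2pt, f2bd⟩ := ZS.bounds f₂ f₂dot hf₂dot hδ hcf₂ hf₂diff
  have hεc : Tendsto (fun ε : ℝ => (ε:ℂ)) l (nhds 0) := by
    have := Complex.continuous_ofReal.continuousAt (x := (0:ℝ))
    simpa using this.tendsto.mono_left nhdsWithin_le_nhds
  have fc : ∀ (g : ℝ → ℝ → ℂ) (gd : ℝ → ℂ),
      (∀ x ∈ Set.Icc (0:ℝ) 1,
        Tendsto (fun ε : ℝ => (g ε x - g 0 x) / (ε:ℂ)) l (nhds (gd x))) →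
      ∀ x ∈ Set.Icc (0:ℝ) 1, Tendsto (fun ε : ℝ => g ε x) l (nhds (g 0 x)) := by
    intro g gd hpt x hx
    have h1 : Tendsto (fun ε : ℝ => g 0 x + (ε:ℂ) * ((g ε x - g 0 x) / (ε:ℂ))) l
        (nhds (g 0 x + 0 * gd x)) := tendsto_const_nhds.add (hεc.mul (hpt x hx))
    rw [show g 0 x + 0 * gd x = g 0 x by ring] at h1
    refine h1.congr' ?_
    filter_upwards [self_mem_nhdsWithin] with ε (hε : ε ≠ 0)
    have hεC : (ε:ℂ) ≠ 0 := by exact_mod_cast hε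
    field_simp
    ring
  have f1c := fc f₁ f₁dot f1pt
  have f2c := fc f₂ f₂dot f2pt
  -- limits of the two integrals
  have hIoo : ∀ᶠ ε in l, ε ∈ Set.Ioo (-δ) δ :=
    eventually_nhdsWithin_of_eventually_nhds (Ioo_mem_nhds (by linarith) hδ)
  have hne : ∀ᶠ ε in l, ε ≠ 0 := by
    filter_upwards [self_mem_nhdsWithin] with ε hε using hε
  obtain ⟨Mu, hMu⟩ : ∃ M, ∀ x ∈ Set.Icc (0:ℝ) 1, ‖udot x‖ ≤ M :=
    isCompact_Icc.exists_bound_of_continuousOn hudot.continuousOn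
  obtain ⟨M1, hM1⟩ : ∃ M, ∀ x ∈ Set.Icc (0:ℝ) 1, ‖f₁ 0 x‖ ≤ M :=
    isCompact_Icc.exists_bound_of_continuousOn (hcf₁ 0 h0).continuousOn
  obtain ⟨M2, hM2⟩ : ∃ M, ∀ x ∈ Set.Icc (0:ℝ) 1, ‖f₂ 0 x‖ ≤ M :=
    isCompact_Icc.exists_bound_of_continuousOn (hcf₂ 0 h0).continuousOn
  have hMu0 : 0 ≤ Mu := le_trans (norm_nonneg _) (hMu 0 ⟨le_refl _, zero_le_one⟩)
  have hM10 : 0 ≤ M1 := le_trans (norm_nonneg _) (hM1 0 ⟨le_refl _, zero_le_one⟩)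
  have hM20 : 0 ≤ M2 := le_trans (norm_nonneg _) (hM2 0 ⟨le_refl _, zero_le_one⟩)
  have hΦmeas : ∀ᶠ ε in l, Continuous (Φ ε) := by
    filter_upwards [hIoo] with ε hε
    apply Continuous.sub
    · exact ((((hcu ε hε).sub (hcu 0 h0)).div_const _).mul (hcf₂ ε hε)).mul (hcf₂ 0 h0)
    · exact (((continuous_star.comp (((hcu ε hε).sub (hcu 0 h0)).div_const _))).mul
        (hcf₁ ε hε)).mul (hcf₁ 0 h0)
  have hPmeas : ∀ᶠ ε in l, Continuous (P ε) := by
    filter_upwards [hIoo] with ε hε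
    exact ((hcf₁ ε hε).mul (hcf₂ 0 h0)).add ((hcf₂ ε hε).mul (hcf₁ 0 h0))
  have hΦbd : ∀ᶠ ε in l, ∀ x ∈ Set.Icc (0:ℝ) 1,
      ‖Φ ε x‖ ≤ (1 + Mu) * (1 + M2) * M2 + (1 + Mu) * (1 + M1) * M1 := by
    filter_upwards [ubd 1 one_pos, f1bd 1 one_pos, f2bd 1 one_pos] with ε hu1 hf1 hf2 x hx
    have hq : ‖(u ε x - u 0 x) / (ε:ℂ)‖ ≤ 1 + Mu := by
      calc ‖(u ε x - u 0 x) / (ε:ℂ)‖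
          ≤ ‖(u ε x - u 0 x) / (ε:ℂ) - udot x‖ + ‖udot x‖ := by
            have := norm_add_le ((u ε x - u 0 x) / (ε:ℂ) - udot x) (udot x); simpa using this
        _ ≤ 1 + Mu := add_le_add (hu1 x hx).1 (hMu x hx)
    have hg1 : ‖f₁ ε x‖ ≤ 1 + M1 := by
      calc ‖f₁ ε x‖ ≤ ‖f₁ ε x - f₁ 0 x‖ + ‖f₁ 0 x‖ := by
            have := norm_add_le (f₁ ε x - f₁ 0 x) (f₁ 0 x); simpa using this
        _ ≤ 1 + M1 := add_le_add (hf1 x hx).2 (hM1 x hx)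
    have hg2 : ‖f₂ ε x‖ ≤ 1 + M2 := by
      calc ‖f₂ ε x‖ ≤ ‖f₂ ε x - f₂ 0 x‖ + ‖f₂ 0 x‖ := by
            have := norm_add_le (f₂ ε x - f₂ 0 x) (f₂ 0 x); simpa using this
        _ ≤ 1 + M2 := add_le_add (hf2 x hx).2 (hM2 x hx)
    calc ‖Φ ε x‖ ≤ ‖(u ε x - u 0 x) / (ε:ℂ) * f₂ ε x * f₂ 0 x‖
          + ‖(starRingEnd ℂ) ((u ε x - u 0 x) / (ε:ℂ)) * f₁ ε x * f₁ 0 x‖ := norm_sub_le _ _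
      _ ≤ (1 + Mu) * (1 + M2) * M2 + (1 + Mu) * (1 + M1) * M1 := by
          rw [norm_mul, norm_mul, norm_mul, norm_mul, RCLike.norm_conj]
          gcongr <;> first
            | exact hq | exact hg1 | exact hg2 | exact hM1 x hx | exact hM2 x hx
            | positivity
  have hPbd : ∀ᶠ ε in l, ∀ x ∈ Set.Icc (0:ℝ) 1,
      ‖P ε x‖ ≤ (1 + M1) * M2 + (1 + M2) * M1 := by
    filter_upwards [f1bd 1 one_pos, f2bd 1 one_pos] with ε hf1 hf2 x hx
    have hg1 : ‖f₁ ε x‖ ≤ 1 + M1 := by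
      calc ‖f₁ ε x‖ ≤ ‖f₁ ε x - f₁ 0 x‖ + ‖f₁ 0 x‖ := by
            have := norm_add_le (f₁ ε x - f₁ 0 x) (f₁ 0 x); simpa using this
        _ ≤ 1 + M1 := add_le_add (hf1 x hx).2 (hM1 x hx)
    have hg2 : ‖f₂ ε x‖ ≤ 1 + M2 := by
      calc ‖f₂ ε x‖ ≤ ‖f₂ ε x - f₂ 0 x‖ + ‖f₂ 0 x‖ := by
            have := norm_add_le (f₂ ε x - f₂ 0 x) (f₂ 0 x); simpa using this
        _ ≤ 1 + M2 := add_le_add (hf2 x hx).2 (hM2 x hx)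
    calc ‖P ε x‖ ≤ ‖f₁ ε x * f₂ 0 x‖ + ‖f₂ ε x * f₁ 0 x‖ := norm_add_le _ _
      _ ≤ (1 + M1) * M2 + (1 + M2) * M1 := by
          rw [norm_mul, norm_mul]
          gcongr <;> first
            | exact hg1 | exact hg2 | exact hM1 x hx | exact hM2 x hx | positivity
  have hΦpt : ∀ x ∈ Set.Icc (0:ℝ) 1, Tendsto (fun ε => Φ ε x) l
      (nhds (udot x * f₂ 0 x * f₂ 0 x - (starRingEnd ℂ) (udot x) * f₁ 0 x * f₁ 0 x)) := by
    intro x hx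
    exact (((upt x hx).mul (f2c x hx)).mul tendsto_const_nhds).sub
      ((((Complex.continuous_conj.tendsto _).comp (upt x hx)).mul (f1c x hx)).mul
        tendsto_const_nhds)
  have hPpt : ∀ x ∈ Set.Icc (0:ℝ) 1, Tendsto (fun ε => P ε x) l
      (nhds (f₁ 0 x * f₂ 0 x + f₂ 0 x * f₁ 0 x)) := by
    intro x hx
    exact ((f1c x hx).mul tendsto_const_nhds).add ((f2c x hx).mul tendsto_const_nhds)
  have hΦlim := ZS.tendsto_int Φ _ _ hΦmeas hΦbd hΦpt
  have hPlim := ZS.tendsto_int P _ _ hPmeas hPbd hPpt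
  -- the limit of ∫ P is 2
  have hA0 : (∫ x in (0:ℝ)..1, (f₁ 0 x * f₂ 0 x + f₂ 0 x * f₁ 0 x)) = 2 := by
    have heq : ∀ x, f₁ 0 x * f₂ 0 x + f₂ 0 x * f₁ 0 x = ((2 * ‖f₁ 0 x‖ ^ 2 : ℝ) : ℂ) := by
      intro x
      rw [hsym 0 h0 x, mul_comm ((starRingEnd ℂ) (f₁ 0 x)) (f₁ 0 x), Complex.mul_conj,
        Complex.normSq_eq_norm_sq]
      push_cast
      ring
    rw [intervalIntegral.integral_congr (fun x _ => heq x), intervalIntegral.integral_ofReal]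
    rw [intervalIntegral.integral_const_mul, hnorm 0 h0]
    norm_num
  -- slope limit
  have hslope : Tendsto (fun ε => (lam ε - lam 0) / ε) l (nhds (deriv lam 0)) := by
    have := hlam.hasDerivAt
    rw [hasDerivAt_iff_tendsto_slope] at this
    refine this.congr fun ε => ?_
    simp [slope_def_field, div_eq_inv_mul]
  -- combine
  have hq : Tendsto (fun ε => Complex.I * (((lam ε - lam 0) / ε : ℝ) : ℂ)
      * ∫ x in (0:ℝ)..1, P ε x) l
      (nhds (Complex.I * ((deriv lam 0 : ℝ) : ℂ) * 2)) := by
    rw [hA0] at hPlim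
    exact (tendsto_const_nhds.mul
      ((Complex.continuous_ofReal.tendsto _).comp hslope)).mul hPlim
  have heq' : ∀ᶠ ε in l, Complex.I * (((lam ε - lam 0) / ε : ℝ) : ℂ)
      * ∫ x in (0:ℝ)..1, P ε x = ∫ x in (0:ℝ)..1, Φ ε x := by
    filter_upwards [hIoo, hne] with ε hε hε0
    have hεC : (ε:ℂ) ≠ 0 := by exact_mod_cast hε0
    apply mul_left_cancel₀ hεC
    rw [key ε hε hε0]
    push_cast
    field_simp
    try ring
  have E := tendsto_nhds_unique (hq.congr' heq') hΦlim
  -- unravel the limit identity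
  set w : ℂ := ∫ x in (0:ℝ)..1, (starRingEnd ℂ) (udot x) * f₁ 0 x * f₁ 0 x with hw
  have hΦ0 : (∫ x in (0:ℝ)..1,
      (udot x * f₂ 0 x * f₂ 0 x - (starRingEnd ℂ) (udot x) * f₁ 0 x * f₁ 0 x))
      = (starRingEnd ℂ) w - w := by
    have heq : ∀ x, udot x * f₂ 0 x * f₂ 0 x - (starRingEnd ℂ) (udot x) * f₁ 0 x * f₁ 0 x
        = (starRingEnd ℂ) ((starRingEnd ℂ) (udot x) * f₁ 0 x * f₁ 0 x)
          - (starRingEnd ℂ) (udot x) * f₁ 0 x * f₁ 0 x := by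
      intro x
      rw [hsym 0 h0 x]
      simp only [map_mul, Complex.conj_conj]
      try ring
    rw [intervalIntegral.integral_congr (fun x _ => heq x)]
    have hψc : Continuous (fun x => (starRingEnd ℂ) (udot x) * f₁ 0 x * f₁ 0 x) :=
      ((continuous_star.comp hudot).mul (hcf₁ 0 h0)).mul (hcf₁ 0 h0)
    have hψc2 : Continuous fun x => (starRingEnd ℂ)
        ((starRingEnd ℂ) (udot x) * f₁ 0 x * f₁ 0 x) := Complex.continuous_conj.comp hψc
    have hconj : (∫ x in (0:ℝ)..1,
        (starRingEnd ℂ) ((starRingEnd ℂ) (udot x) * f₁ 0 x * f₁ 0 x)) = (starRingEnd ℂ) w := by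
      rw [hw]
      simp only [intervalIntegral]
      rw [map_sub, ← integral_conj, ← integral_conj]
    rw [intervalIntegral.integral_sub (hψc2.intervalIntegrable 0 1)
      (hψc.intervalIntegrable 0 1), hconj]
  rw [hΦ0] at E
  -- final algebra on real/imaginary parts
  have hT : (∫ x in (0:ℝ)..1, (starRingEnd ℂ) (udot x) * (Complex.I * (f₁ 0 x) ^ 2))
      = Complex.I * w := by
    have heq : ∀ x, (starRingEnd ℂ) (udot x) * (Complex.I * (f₁ 0 x) ^ 2)
        = Complex.I * ((starRingEnd ℂ) (udot x) * f₁ 0 x * f₁ 0 x) := by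
      intro x; ring
    rw [intervalIntegral.integral_congr (fun x _ => heq x),
      intervalIntegral.integral_const_mul]
  rw [hT]
  have hEim := congrArg Complex.im E
  simp only [Complex.mul_im, Complex.mul_re, Complex.I_re, Complex.I_im, Complex.ofReal_re,
    Complex.ofReal_im, Complex.sub_im, Complex.conj_im, Complex.conj_re, Complex.mul_re,
    Complex.re_ofNat, Complex.im_ofNat] at hEim
  simp only [Complex.mul_re, Complex.I_re, Complex.I_im]
  nlinarith [hEim]
end

section
/- Let u : ℝ → ℂ be continuously differentiable and 1-periodic, and let A, B ≥ 0. Suppose ∫₀¹ |u(x)|² dx ≤ A and ∫₀¹ |u'(x)|² dx ≤ B + ∫₀¹ |u(x)|⁴ dx. Then ∫₀¹ |u'(x)|² dx ≤ 2B + 2A² + 4A³. -/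
open scoped RealInnerProductSpace


/-- A priori `H¹` bound: if a `C¹` 1-periodic function has `L²` norm squared
at most `A` and its derivative satisfies the energy inequality
`∫|u'|² ≤ B + ∫|u|⁴`, then `∫|u'|² ≤ 2B + 2A² + 4A³`. -/
theorem periodic_H1_apriori_bound
    (u : ℝ → ℂ) (hu : ContDiff ℝ 1 u) (hper : Function.Periodic u 1)
    (A B : ℝ) (hA : 0 ≤ A) (hB : 0 ≤ B)
    (h1 : (∫ x in (0:ℝ)..1, ‖u x‖ ^ 2) ≤ A)
    (h2 : (∫ x in (0:ℝ)..1, ‖deriv u x‖ ^ 2)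
        ≤ B + ∫ x in (0:ℝ)..1, ‖u x‖ ^ 4) :
    (∫ x in (0:ℝ)..1, ‖deriv u x‖ ^ 2) ≤ 2 * B + 2 * A ^ 2 + 4 * A ^ 3 := by
  have hcu : Continuous u := hu.continuous
  have hcu' : Continuous (deriv u) := hu.continuous_deriv le_rfl
  set E : ℝ := ∫ x in (0:ℝ)..1, ‖deriv u x‖ ^ 2 with hE
  have hE0 : 0 ≤ E :=
    intervalIntegral.integral_nonneg (by norm_num) (fun x _ => by positivity)
  set g : ℝ → ℝ := fun x => ‖u x‖ ^ 2 with hgdef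
  set g' : ℝ → ℝ := fun x => 2 * ⟪u x, deriv u x⟫ with hg'def
  have hcn2 : Continuous fun x => ‖u x‖ ^ 2 := hcu.norm.pow 2
  have hcd2 : Continuous fun x => ‖deriv u x‖ ^ 2 := hcu'.norm.pow 2
  have hcn4 : Continuous fun x => ‖u x‖ ^ 4 := hcu.norm.pow 4
  have hcg : Continuous g := hcn2
  have hcg' : Continuous g' := by
    apply Continuous.mul continuous_const
    exact Continuous.inner hcu hcu'
  have hgd : ∀ x, HasDerivAt g (g' x) x := by
    intro x
    have hd : HasDerivAt u (deriv u x) x := (hu.differentiable one_ne_zero x).hasDerivAt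
    have h := hd.inner ℝ hd
    have heq : (fun t => ⟪u t, u t⟫) = g := by
      funext t; simp [hgdef, real_inner_self_eq_norm_sq]
    rw [heq] at h
    refine h.congr_deriv ?_
    rw [real_inner_comm (u x) (deriv u x)]
    ring
  -- FTC
  have hFTC : ∀ a b : ℝ, (∫ t in a..b, g' t) = g b - g a := by
    intro a b
    exact intervalIntegral.integral_eq_sub_of_hasDerivAt (fun t _ => hgd t)
      (hcg'.intervalIntegrable a b)
  -- minimum point of g on [0,1]
  obtain ⟨y, hy, hymin⟩ := (isCompact_Icc (a := (0:ℝ)) (b := 1)).exists_isMinOn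
    (Set.nonempty_Icc.2 zero_le_one) hcg.continuousOn
  have hgyA : g y ≤ A := by
    have : g y * (1 - 0) ≤ ∫ x in (0:ℝ)..1, g x := by
      have := intervalIntegral.integral_mono_on (μ := MeasureTheory.volume) (a := (0:ℝ)) (b := 1) zero_le_one
        (intervalIntegrable_const (μ := MeasureTheory.volume) (c := g y)) (hcg.intervalIntegrable 0 1)
        (fun x hx => hymin hx)
      simpa using this
    simpa using this.trans h1
  -- key: for any ε > 0, sup bound and the L⁴ estimate
  have key : ∀ ε : ℝ, 0 < ε →
      (∫ x in (0:ℝ)..1, ‖u x‖ ^ 4) ≤ (A + A / ε + ε * E) * A := by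
    intro ε hε
    have habs : (∫ t in (0:ℝ)..1, |g' t|) ≤ A / ε + ε * E := by
      have hle : ∀ t ∈ Set.Icc (0:ℝ) 1,
          |g' t| ≤ (1/ε) * ‖u t‖ ^ 2 + ε * ‖deriv u t‖ ^ 2 := by
        intro t _
        have h1' : |g' t| ≤ 2 * (‖u t‖ * ‖deriv u t‖) := by
          have := abs_real_inner_le_norm (u t) (deriv u t)
          calc |g' t| = 2 * |⟪u t, deriv u t⟫| := by
                simp [hg'def, abs_mul]
            _ ≤ 2 * (‖u t‖ * ‖deriv u t‖) := by nlinarith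
        refine h1'.trans ?_
        have hs := sq_nonneg (‖u t‖ - ε * ‖deriv u t‖)
        have h2' : ε * (2 * (‖u t‖ * ‖deriv u t‖))
            ≤ ε * (1/ε * ‖u t‖ ^ 2 + ε * ‖deriv u t‖ ^ 2) := by
          have hinv : ε * (1/ε * ‖u t‖ ^ 2) = ‖u t‖ ^ 2 := by field_simp
          nlinarith
        exact le_of_mul_le_mul_left h2' hε
      have := intervalIntegral.integral_mono_on (μ := MeasureTheory.volume) (a := (0:ℝ)) (b := 1) zero_le_one
        (hcg'.abs.intervalIntegrable 0 1)
        (((continuous_const.mul hcn2).add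
          (continuous_const.mul hcd2)).intervalIntegrable 0 1)
        hle
      have hi1 : IntervalIntegrable (fun t => (1/ε) * ‖u t‖ ^ 2) MeasureTheory.volume 0 1 :=
        (continuous_const.mul hcn2).intervalIntegrable 0 1
      have hi2 : IntervalIntegrable (fun t => ε * ‖deriv u t‖ ^ 2) MeasureTheory.volume 0 1 :=
        (continuous_const.mul hcd2).intervalIntegrable 0 1
      have hsplit : (∫ t in (0:ℝ)..1, ((1/ε) * ‖u t‖ ^ 2 + ε * ‖deriv u t‖ ^ 2))
          = (1/ε) * (∫ t in (0:ℝ)..1, ‖u t‖ ^ 2) + ε * E := by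
        rw [intervalIntegral.integral_add hi1 hi2, intervalIntegral.integral_const_mul,
          intervalIntegral.integral_const_mul]
      change _ ≤ ∫ t in (0:ℝ)..1, ((1/ε) * ‖u t‖ ^ 2 + ε * ‖deriv u t‖ ^ 2) at this
      rw [hsplit] at this
      refine this.trans ?_
      have : (1/ε) * (∫ t in (0:ℝ)..1, ‖u t‖ ^ 2) ≤ (1/ε) * A :=
        mul_le_mul_of_nonneg_left h1 (by positivity)
      have h'' : (1/ε) * A = A / ε := one_div_mul_eq_div ε A
      linarith
    -- pointwise sup bound
    have hsup : ∀ x ∈ Set.Icc (0:ℝ) 1, g x ≤ A + (A / ε + ε * E) := by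
      intro x hx
      have h4 : g x - g y = ∫ t in y..x, g' t := (hFTC y x).symm
      have h5 : |∫ t in y..x, g' t| ≤ ∫ t in (0:ℝ)..1, |g' t| := by
        rcases le_total y x with hyx | hxy
        · calc |∫ t in y..x, g' t| ≤ ∫ t in y..x, |g' t| := by
                simpa using intervalIntegral.abs_integral_le_integral_abs hyx (f := g')
            _ ≤ ∫ t in (0:ℝ)..1, |g' t| :=
              intervalIntegral.integral_mono_interval hy.1 hyx hx.2
                (Filter.Eventually.of_forall fun t => abs_nonneg _)
                (hcg'.abs.intervalIntegrable 0 1)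
        · calc |∫ t in y..x, g' t| = |∫ t in x..y, g' t| := by
                rw [intervalIntegral.integral_symm]; rw [abs_neg]
            _ ≤ ∫ t in x..y, |g' t| := by
                simpa using intervalIntegral.abs_integral_le_integral_abs hxy (f := g')
            _ ≤ ∫ t in (0:ℝ)..1, |g' t| :=
              intervalIntegral.integral_mono_interval hx.1 hxy hy.2
                (Filter.Eventually.of_forall fun t => abs_nonneg _)
                (hcg'.abs.intervalIntegrable 0 1)
      have := h5.trans habs
      have h6 : g x - g y ≤ A / ε + ε * E := by
        rw [h4]; exact (le_abs_self _).trans this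
      linarith [hgyA]
    -- integrate: ∫ g² ≤ C ∫ g ≤ C A
    set C : ℝ := A + (A / ε + ε * E) with hC
    have hC0 : 0 ≤ C := by
      have : 0 ≤ A / ε := by positivity
      have : 0 ≤ ε * E := by positivity
      positivity
    have h7 : (∫ x in (0:ℝ)..1, ‖u x‖ ^ 4) ≤ ∫ x in (0:ℝ)..1, C * g x := by
      apply intervalIntegral.integral_mono_on zero_le_one
        (hcn4.intervalIntegrable 0 1)
        ((continuous_const.mul hcg).intervalIntegrable 0 1)
      intro x hx
      have hg0 : (0:ℝ) ≤ g x := by positivity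
      have := hsup x hx
      calc ‖u x‖ ^ 4 = g x * g x := by simp [hgdef]; ring
        _ ≤ C * g x := mul_le_mul_of_nonneg_right this hg0
    have h8 : (∫ x in (0:ℝ)..1, C * g x) ≤ C * A := by
      rw [intervalIntegral.integral_const_mul]
      exact mul_le_mul_of_nonneg_left h1 hC0
    calc (∫ x in (0:ℝ)..1, ‖u x‖ ^ 4) ≤ C * A := h7.trans h8
      _ = (A + A / ε + ε * E) * A := by rw [hC]; ring
  -- finish
  rcases eq_or_lt_of_le hA with hA0 | hApos
  · subst hA0
    have hk := key 1 one_pos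
    simp only [zero_add, zero_div, add_zero, one_mul, mul_zero] at hk
    norm_num
    linarith
  · have := key (1 / (2 * A)) (by positivity)
    have hrw : A / (1 / (2 * A)) = 2 * A ^ 2 := by
      field_simp
    rw [hrw] at this
    have h9 : (A + 2 * A ^ 2 + 1 / (2 * A) * E) * A = A ^ 2 + 2 * A ^ 3 + E / 2 := by
      field_simp
    rw [h9] at this
    linarith
end

section
/- Let u : ℝ → ℂ be twice continuously differentiable and 1-periodic, and let A, B, C ≥ 0. Suppose ∫₀¹ |u(x)|² dx ≤ A, ∫₀¹ |u'(x)|² dx ≤ B, and ∫₀¹ ( |u''(x)|² + (1/2)|u(x)|⁶ − (1/2)((d/dx)|u(x)|²)² − 3|u'(x)|²·|u(x)|² ) dx ≤ C. Then ∫₀¹ |u''(x)|² dx ≤ C + 5·(A + 2·√(A·B))·B. -/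
open MeasureTheory Set
open MeasureTheory Set

lemma memL2_of_cont (f : ℝ → ℝ) (hf : Continuous f) :
    MemLp f (ENNReal.ofReal 2) (volume.restrict (Ioc (0:ℝ) 1)) := by
  obtain ⟨C, hC⟩ := (isCompact_Icc (a := (0:ℝ)) (b := 1)).exists_bound_of_continuousOn
    hf.continuousOn
  apply MemLp.of_bound hf.aestronglyMeasurable.restrict C
  exact (ae_restrict_iff' measurableSet_Ioc).2 (Filter.Eventually.of_forall
    (fun x hx => hC x (Ioc_subset_Icc_self hx)))

lemma cauchy_schwarz_01 (f g : ℝ → ℝ) (hf : Continuous f) (hg : Continuous g)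
    (hfn : ∀ x, 0 ≤ f x) (hgn : ∀ x, 0 ≤ g x) {A B : ℝ} (hA : 0 ≤ A) (hB : 0 ≤ B)
    (hIA : (∫ x in (0:ℝ)..1, f x ^ 2) ≤ A) (hIB : (∫ x in (0:ℝ)..1, g x ^ 2) ≤ B) :
    (∫ x in (0:ℝ)..1, f x * g x) ≤ Real.sqrt (A * B) := by
  have hconj : Real.HolderConjugate 2 2 := Real.HolderConjugate.two_two
  have key := integral_mul_le_Lp_mul_Lq_of_nonneg (μ := volume.restrict (Ioc (0:ℝ) 1)) hconj
    (Filter.Eventually.of_forall hfn) (Filter.Eventually.of_forall hgn)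
    (memL2_of_cont f hf) (memL2_of_cont g hg)
  have e1 : ∀ (h : ℝ → ℝ), (∫ x in (0:ℝ)..1, h x) = ∫ x in Ioc (0:ℝ) 1, h x := fun h => by
    rw [intervalIntegral.integral_of_le zero_le_one]
  have h2 : ∀ x : ℝ, ∀ y : ℝ → ℝ, (y x) ^ (2:ℝ) = y x ^ 2 := fun x y => by
    rw [← Real.rpow_natCast (y x) 2]; norm_num
  rw [e1 (fun x => f x * g x)]
  refine key.trans ?_
  have hFn : 0 ≤ ∫ x in Ioc (0:ℝ) 1, f x ^ (2:ℝ) :=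
    integral_nonneg fun x => Real.rpow_nonneg (hfn x) 2
  have hGn : 0 ≤ ∫ x in Ioc (0:ℝ) 1, g x ^ (2:ℝ) :=
    integral_nonneg fun x => Real.rpow_nonneg (hgn x) 2
  have hF : (∫ x in Ioc (0:ℝ) 1, f x ^ (2:ℝ)) ≤ A := by
    simp only [h2]; rw [← e1 (fun x => f x ^ 2)]; exact hIA
  have hG : (∫ x in Ioc (0:ℝ) 1, g x ^ (2:ℝ)) ≤ B := by
    simp only [h2]; rw [← e1 (fun x => g x ^ 2)]; exact hIB
  calc (∫ x in Ioc (0:ℝ) 1, f x ^ (2:ℝ)) ^ ((1:ℝ)/2) * (∫ x in Ioc (0:ℝ) 1, g x ^ (2:ℝ)) ^ ((1:ℝ)/2)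
      = Real.sqrt (∫ x in Ioc (0:ℝ) 1, f x ^ (2:ℝ)) * Real.sqrt (∫ x in Ioc (0:ℝ) 1, g x ^ (2:ℝ)) := by
        rw [Real.sqrt_eq_rpow, Real.sqrt_eq_rpow]
    _ ≤ Real.sqrt A * Real.sqrt B := by
        exact mul_le_mul (Real.sqrt_le_sqrt hF) (Real.sqrt_le_sqrt hG) (Real.sqrt_nonneg _) (Real.sqrt_nonneg _)
    _ = Real.sqrt (A * B) := (Real.sqrt_mul hA B).symm


lemma sup_bound_01 (f g : ℝ → ℝ) (hf : Continuous f) (hg : Continuous g)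
    (hfg : ∀ x, HasDerivAt f (g x) x) {x : ℝ} (hx : x ∈ Icc (0:ℝ) 1) :
    f x ≤ (∫ y in (0:ℝ)..1, f y) + ∫ y in (0:ℝ)..1, |g y| := by
  obtain ⟨y₀, hy₀mem, hy₀min⟩ := isCompact_Icc.exists_isMinOn (nonempty_Icc.2 zero_le_one)
    hf.continuousOn
  have hmin : f y₀ ≤ ∫ y in (0:ℝ)..1, f y := by
    have := intervalIntegral.integral_mono_on (μ := volume) (f := fun _ => f y₀) (g := f)
      zero_le_one intervalIntegrable_const (hf.intervalIntegrable 0 1)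
      (fun t ht => hy₀min ht)
    simpa using this
  have hftc : f x - f y₀ = ∫ y in y₀..x, g y := by
    rw [intervalIntegral.integral_eq_sub_of_hasDerivAt (fun t _ => hfg t)
      (hg.intervalIntegrable y₀ x)]
  have hsub : Set.uIoc y₀ x ⊆ Set.uIoc (0:ℝ) 1 := by
    rw [uIoc_of_le (zero_le_one)]
    intro t ht
    rcases Set.mem_uIoc.1 ht with h | h
    · exact ⟨lt_of_le_of_lt hy₀mem.1 h.1, h.2.trans hx.2⟩
    · exact ⟨lt_of_le_of_lt hx.1 h.1, h.2.trans hy₀mem.2⟩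
  have habs : (∫ y in y₀..x, g y) ≤ ∫ y in (0:ℝ)..1, |g y| := by
    set G : ℝ → ℝ := fun y => |g y| with hG
    have hGc : Continuous G := hg.abs
    have h1 : (∫ y in y₀..x, g y) ≤ |∫ y in y₀..x, G y| := by
      have := intervalIntegral.norm_integral_le_abs_integral_norm (f := g) (a := y₀) (b := x)
        (μ := volume)
      simp only [Real.norm_eq_abs] at this
      exact (le_abs_self _).trans this
    have h2 : |∫ y in y₀..x, G y| ≤ |∫ y in (0:ℝ)..1, G y| := by
      refine intervalIntegral.abs_integral_mono_interval hsub ?_ (hGc.intervalIntegrable 0 1)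
      exact Filter.Eventually.of_forall fun t => abs_nonneg _
    have h3 : |∫ y in (0:ℝ)..1, G y| = ∫ y in (0:ℝ)..1, G y := abs_of_nonneg
      (intervalIntegral.integral_nonneg zero_le_one fun t _ => abs_nonneg _)
    calc (∫ y in y₀..x, g y) ≤ |∫ y in y₀..x, G y| := h1
      _ ≤ |∫ y in (0:ℝ)..1, G y| := h2
      _ = ∫ y in (0:ℝ)..1, G y := h3
  linarith


set_option maxHeartbeats 800000 in
/-- A priori `H²` bound derived from the conserved functional `I₅` of the
periodic nonlinear Schrödinger equation. -/
theorem periodic_H2_apriori_bound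
    (u : ℝ → ℂ) (hu : ContDiff ℝ 2 u) (hper : Function.Periodic u 1)
    (A B C : ℝ) (hA : 0 ≤ A) (hB : 0 ≤ B) (hC : 0 ≤ C)
    (h1 : (∫ x in (0:ℝ)..1, ‖u x‖ ^ 2) ≤ A)
    (h2 : (∫ x in (0:ℝ)..1, ‖deriv u x‖ ^ 2) ≤ B)
    (h3 : (∫ x in (0:ℝ)..1,
        (‖deriv (deriv u) x‖ ^ 2 + (1 / 2) * ‖u x‖ ^ 6
          - (1 / 2) * (deriv (fun y => ‖u y‖ ^ 2) x) ^ 2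
          - 3 * ‖deriv u x‖ ^ 2 * ‖u x‖ ^ 2)) ≤ C) :
    (∫ x in (0:ℝ)..1, ‖deriv (deriv u) x‖ ^ 2)
      ≤ C + 5 * (A + 2 * Real.sqrt (A * B)) * B := by
  -- basic regularity
  have h2' : ContDiff ℝ (1 + 1) u := by
    have : ((2:ℕ) : WithTop ℕ∞) = 1 + 1 := by norm_num
    rw [← this]; exact_mod_cast hu
  have hud : Differentiable ℝ u := hu.differentiable two_ne_zero
  have hu' : ContDiff ℝ 1 (deriv u) := (contDiff_succ_iff_deriv.mp h2').2.2
  have hu'd : Differentiable ℝ (deriv u) := hu'.differentiable one_ne_zero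
  have hcu : Continuous u := hu.continuous
  have hcu' : Continuous (deriv u) := hu'.continuous
  have hcu'' : Continuous (deriv (deriv u)) :=
    (contDiff_one_iff_deriv.mp hu').2
  -- the derivative of x ↦ ‖u x‖²
  set g : ℝ → ℝ := fun x => 2 * (inner ℝ (u x) (deriv u x) : ℝ) with hg
  have hgc : Continuous g := continuous_const.mul (hcu.inner hcu')
  have hfd : ∀ x, HasDerivAt (fun y => ‖u y‖ ^ 2) (g x) x := by
    intro x
    have heq : (fun y => ‖u y‖ ^ 2) = fun y => (inner ℝ (u y) (u y) : ℝ) := by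
      funext y; rw [real_inner_self_eq_norm_sq]
    rw [heq]
    have := ((hud x).hasDerivAt).inner ℝ ((hud x).hasDerivAt)
    simpa [hg, real_inner_comm, two_mul] using this
  have hderiv_eq : deriv (fun y => ‖u y‖ ^ 2) = g := funext fun x => (hfd x).deriv
  have hfc : Continuous (fun y => ‖u y‖ ^ 2) := hcu.norm.pow 2
  -- pointwise bound on |g|
  have hg_ptwise : ∀ x, |g x| ≤ 2 * (‖u x‖ * ‖deriv u x‖) := by
    intro x
    rw [hg, abs_mul, abs_two]
    exact mul_le_mul_of_nonneg_left (abs_real_inner_le_norm _ _) (by norm_num)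
  -- ∫ |g| ≤ 2 √(A B)
  have hCS : (∫ x in (0:ℝ)..1, ‖u x‖ * ‖deriv u x‖) ≤ Real.sqrt (A * B) :=
    cauchy_schwarz_01 _ _ hcu.norm hcu'.norm (fun x => norm_nonneg _)
      (fun x => norm_nonneg _) hA hB h1 h2
  have hIg : (∫ x in (0:ℝ)..1, |g x|) ≤ 2 * Real.sqrt (A * B) := by
    calc (∫ x in (0:ℝ)..1, |g x|)
        ≤ ∫ x in (0:ℝ)..1, 2 * (‖u x‖ * ‖deriv u x‖) := by
          apply intervalIntegral.integral_mono_on zero_le_one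
            (hgc.abs.intervalIntegrable 0 1)
            ((continuous_const.mul (hcu.norm.mul hcu'.norm)).intervalIntegrable 0 1)
            (fun x _ => hg_ptwise x)
      _ = 2 * ∫ x in (0:ℝ)..1, ‖u x‖ * ‖deriv u x‖ := by
          rw [intervalIntegral.integral_const_mul]
      _ ≤ 2 * Real.sqrt (A * B) := by linarith
  -- sup bound: ‖u x‖² ≤ M on [0,1]
  set M : ℝ := A + 2 * Real.sqrt (A * B) with hM
  have hM0 : 0 ≤ M := by positivity
  have hsup : ∀ x ∈ Icc (0:ℝ) 1, ‖u x‖ ^ 2 ≤ M := by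
    intro x hx
    have h := sup_bound_01 (fun y => ‖u y‖ ^ 2) g hfc hgc hfd hx
    have h' : ‖u x‖ ^ 2 ≤ (∫ y in (0:ℝ)..1, ‖u y‖ ^ 2) + ∫ y in (0:ℝ)..1, |g y| := h
    simp only [hM]
    linarith
  -- split the integral
  set E : ℝ → ℝ := fun x => ‖deriv (deriv u) x‖ ^ 2 + (1 / 2) * ‖u x‖ ^ 6
      - (1 / 2) * (g x) ^ 2 - 3 * ‖deriv u x‖ ^ 2 * ‖u x‖ ^ 2 with hE
  set R : ℝ → ℝ := fun x => (1 / 2) * (g x) ^ 2 + 3 * ‖deriv u x‖ ^ 2 * ‖u x‖ ^ 2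
      - (1 / 2) * ‖u x‖ ^ 6 with hR
  have hEc : Continuous E := by
    apply Continuous.sub
    apply Continuous.sub
    · exact (hcu''.norm.pow 2).add (continuous_const.mul (hcu.norm.pow 6))
    · exact continuous_const.mul (hgc.pow 2)
    · exact (continuous_const.mul (hcu'.norm.pow 2)).mul (hcu.norm.pow 2)
  have hRc : Continuous R := by
    apply Continuous.sub
    · exact (continuous_const.mul (hgc.pow 2)).add
        ((continuous_const.mul (hcu'.norm.pow 2)).mul (hcu.norm.pow 2))
    · exact continuous_const.mul (hcu.norm.pow 6)
  have h3' : (∫ x in (0:ℝ)..1, E x) ≤ C := by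
    rw [hderiv_eq] at h3
    exact h3
  have hsplit : (∫ x in (0:ℝ)..1, ‖deriv (deriv u) x‖ ^ 2)
      = (∫ x in (0:ℝ)..1, E x) + ∫ x in (0:ℝ)..1, R x := by
    rw [← intervalIntegral.integral_add (hEc.intervalIntegrable 0 1)
      (hRc.intervalIntegrable 0 1)]
    apply intervalIntegral.integral_congr
    intro x _
    simp only [hE, hR]
    ring
  -- bound on ∫ R
  have hRptwise : ∀ x ∈ Icc (0:ℝ) 1, R x ≤ 5 * M * ‖deriv u x‖ ^ 2 := by
    intro x hx
    have hgsq : (g x) ^ 2 ≤ 4 * (‖u x‖ ^ 2 * ‖deriv u x‖ ^ 2) := by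
      have h := hg_ptwise x
      have h2 : (g x) ^ 2 ≤ (2 * (‖u x‖ * ‖deriv u x‖)) ^ 2 := by
        rw [← sq_abs]
        exact pow_le_pow_left₀ (abs_nonneg _) h 2
      nlinarith [norm_nonneg (u x), norm_nonneg (deriv u x)]
    have hu6 : 0 ≤ (1 / 2 : ℝ) * ‖u x‖ ^ 6 := by positivity
    have hub : ‖u x‖ ^ 2 ≤ M := hsup x hx
    have hn : 0 ≤ ‖deriv u x‖ ^ 2 := by positivity
    simp only [hR]
    nlinarith
  have hRint : (∫ x in (0:ℝ)..1, R x) ≤ 5 * M * B := by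
    calc (∫ x in (0:ℝ)..1, R x)
        ≤ ∫ x in (0:ℝ)..1, 5 * M * ‖deriv u x‖ ^ 2 := by
          apply intervalIntegral.integral_mono_on zero_le_one
            (hRc.intervalIntegrable 0 1)
            ((continuous_const.mul (hcu'.norm.pow 2)).intervalIntegrable 0 1)
            hRptwise
      _ = 5 * M * ∫ x in (0:ℝ)..1, ‖deriv u x‖ ^ 2 := by
          rw [intervalIntegral.integral_const_mul]
      _ ≤ 5 * M * B := by
          apply mul_le_mul_of_nonneg_left h2
          positivity
  rw [hsplit]
  have : 5 * M * B = 5 * (A + 2 * Real.sqrt (A * B)) * B := by rw [hM]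
  linarith
end
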